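/- Suppose that σ₁ and σ₂ are two proper circular partitions of X that are compatible. Then there exists a circular partition σ' in C(X) with σ₁ ≼ σ' and σ₂ ≼ σ'. -/

import Mathlib

noncomputable section

namespace PhyloCactus

/-- A list of sets is a (linear ordering of a) partition of `X`: at least two parts,
no repeated parts, all parts nonempty, and every element of `X` lies in exactly one part. -/
def IsPartList (X : Type) (l : List (Set X)) : Prop :=
  2 ≤ l.length ∧ l.Nodup ∧ (∀ A ∈ l, A.Nonempty) ∧
    ∀ x : X, ∃! A : Set X, A ∈ l ∧ x ∈ A

/-- One step of circular re-ordering of a list: a cyclic rotation or a reversal. -/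
def CircStep (X : Type) (l l' : List (Set X)) : Prop :=
  l' = l.rotate 1 ∨ l' = l.reverse

/-- Linear orderings of partitions of `X`. -/
abbrev PartList (X : Type) := {l : List (Set X) // IsPartList X l}

/-- Two linear orderings are circularly equivalent if they are related by the
equivalence relation generated by rotations and reversals. -/
def circSetoid (X : Type) : Setoid (PartList X) where
  r a b := Relation.EqvGen (CircStep X) a.1 b.1
  iseqv := ⟨fun _ => Relation.EqvGen.refl _, fun h => Relation.EqvGen.symm _ _ h,
    fun h h' => Relation.EqvGen.trans _ _ _ h h'⟩

/-- A circular partition of `X`: a partition together with a circular ordering of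
its parts, i.e. an equivalence class of linear orderings of partitions of `X`
under cyclic rotation and reversal. -/
def CircPart (X : Type) := Quotient (circSetoid X)

/-- The circular partition determined by a linear ordering of a partition. -/
def CircPart.mk {X : Type} (l : PartList X) : CircPart X :=
  Quotient.mk (circSetoid X) l

/-- The set of parts of a circular partition. -/
def CircPart.parts {X : Type} (σ : CircPart X) : Set (Set X) :=
  {A | ∃ l : PartList X, σ = CircPart.mk l ∧ A ∈ l.1}

/-- The number of parts of a circular partition. -/
def CircPart.numParts {X : Type} (σ : CircPart X) : ℕ := σ.parts.ncard

/-- A circular partition is a split if it has exactly two parts. -/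
def CircPart.IsSplit {X : Type} (σ : CircPart X) : Prop :=
  ∃ l : PartList X, σ = CircPart.mk l ∧ l.1.length = 2

/-- A partition of `X`, as a set of parts. -/
def IsPartition (X : Type) (π : Set (Set X)) : Prop :=
  2 ≤ π.ncard ∧ (∀ A ∈ π, A.Nonempty) ∧ ∀ x : X, ∃! A : Set X, A ∈ π ∧ x ∈ A

/-- Two partitions of `X` are compatible if some part of the first and some part
of the second have union `X`. -/
def PartCompatible {X : Type} (π π' : Set (Set X)) : Prop :=
  ∃ A ∈ π, ∃ B ∈ π', A ∪ B = (Set.univ : Set X)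

/-- A collection of partitions is compatible if any two distinct members are compatible. -/
def PartFamilyCompatible {X : Type} (Ps : Set (Set (Set X))) : Prop :=
  ∀ π ∈ Ps, ∀ π' ∈ Ps, π ≠ π' → PartCompatible π π'

/-- Two circular partitions are compatible if their underlying partitions are. -/
def CircPart.Compatible {X : Type} (σ σ' : CircPart X) : Prop :=
  PartCompatible σ.parts σ'.parts

/-- A set of circular partitions is compatible if any two distinct members are compatible. -/
def CompatibleFamily {X : Type} (C : Set (CircPart X)) : Prop :=
  ∀ σ ∈ C, ∀ τ ∈ C, σ ≠ τ → σ.Compatible τ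

/-- `MergeStep σ σ'` holds if `σ'` is obtained from `σ` by merging two parts that are
adjacent in the circular ordering of `σ` into a single part. -/
def MergeStep {X : Type} (σ σ' : CircPart X) : Prop :=
  ∃ (A B : Set X) (t : List (Set X)) (h : IsPartList X (A :: B :: t))
    (h' : IsPartList X ((A ∪ B) :: t)),
    σ = CircPart.mk ⟨A :: B :: t, h⟩ ∧ σ' = CircPart.mk ⟨(A ∪ B) :: t, h'⟩

/-- `σ ≼ τ`: either `σ = τ`, or `σ` is proper and `σ` is obtained from `τ` by a finite
sequence of merges. -/
def CircPart.Preceq {X : Type} (σ τ : CircPart X) : Prop :=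
  σ = τ ∨ (¬ σ.IsSplit ∧ Relation.ReflTransGen MergeStep τ σ)

/-- A domination map from `C` to `C'`: an injective map with `σ ≼ L σ` for all `σ ∈ C`. -/
def IsDominationMap {X : Type} (C C' : Set (CircPart X))
    (L : CircPart X → CircPart X) : Prop :=
  Set.MapsTo L C C' ∧ Set.InjOn L C ∧ ∀ σ ∈ C, CircPart.Preceq σ (L σ)

/-- `C` is dominated by `C'` if there is a domination map from `C` to `C'`. -/
def Dominates {X : Type} (C C' : Set (CircPart X)) : Prop :=
  ∃ L, IsDominationMap C C' L

end PhyloCactus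

namespace PhyloCactus

/-- A graph is a cactus if any two distinct cycles share at most one vertex. -/
def IsCactus {V : Type} (G : SimpleGraph V) : Prop :=
  ∀ ⦃u v : V⦄ (c : G.Walk u u) (c' : G.Walk v v), c.IsCycle → c'.IsCycle →
    {e | e ∈ c.edges} ≠ {e | e ∈ c'.edges} →
    Set.Subsingleton {w | w ∈ c.support ∧ w ∈ c'.support}

/-- An `X`-cactus: a finite connected cactus together with a labelling map
`φ : X → V` whose image contains every vertex of degree at most two. -/
structure XCactus (X : Type) where
  V : Type
  fintypeV : Fintype V
  G : SimpleGraph V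
  connected : G.Connected
  cactus : IsCactus G
  φ : X → V
  labels : ∀ v : V, (G.neighborSet v).ncard ≤ 2 → v ∈ Set.range φ

namespace XCactus

variable {X : Type}

/-- The trivial `X`-cactus consists of a single vertex. -/
def IsTrivial (N : XCactus X) : Prop := ∀ u v : N.V, u = v

/-- The labels reachable from `w` after deleting the edge set `s`. -/
def compPart (N : XCactus X) (s : Set (Sym2 N.V)) (w : N.V) : Set X :=
  {x : X | (N.G.deleteEdges s).Reachable w (N.φ x)}

/-- The list of label-classes of the connected components met along `vs`
after deleting the edge set `s`. -/
def blockList (N : XCactus X) (s : Set (Sym2 N.V)) (vs : List N.V) : List (Set X) :=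
  vs.map (N.compPart s)

/-- The set `C(N)` of circular partitions of `X` induced by the blocks of `N`:
each cut edge induces a split and each cycle induces a circular partition, whose
circular order is given by the cyclic order of the vertices on the cycle. -/
def circSet (N : XCactus X) : Set (CircPart X) :=
  {σ | ∃ l : PartList X, σ = CircPart.mk l ∧
    ((∃ u v : N.V, N.G.IsBridge s(u, v) ∧ l.1 = N.blockList {s(u, v)} [u, v]) ∨
      (∃ (v : N.V) (c : N.G.Walk v v), c.IsCycle ∧
        l.1 = N.blockList {e | e ∈ c.edges} c.support.tail))}

/-- The set `C_b(N)` of splits of `N`. -/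
def splitSet (N : XCactus X) : Set (CircPart X) := {σ ∈ N.circSet | σ.IsSplit}

/-- The set `C_p(N)` of proper circular partitions of `N`. -/
def properSet (N : XCactus X) : Set (CircPart X) := {σ ∈ N.circSet | ¬ σ.IsSplit}

/-- Isomorphism of `X`-cactuses: a graph isomorphism commuting with the labelling maps. -/
def Isom (N N' : XCactus X) : Prop :=
  ∃ f : N.V ≃ N'.V, (∀ u v : N.V, N.G.Adj u v ↔ N'.G.Adj (f u) (f v)) ∧
    ∀ x : X, f (N.φ x) = N'.φ x

theorem isom_refl (N : XCactus X) : N.Isom N :=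
  ⟨Equiv.refl _, fun _ _ => Iff.rfl, fun _ => rfl⟩

theorem isom_symm {N N' : XCactus X} (h : N.Isom N') : N'.Isom N := by
  obtain ⟨f, hadj, hphi⟩ := h
  refine ⟨f.symm, fun u v => ?_, fun x => ?_⟩
  · simpa using (hadj (f.symm u) (f.symm v)).symm
  · rw [← hphi x]; simp

theorem isom_trans {a b c : XCactus X} (h1 : a.Isom b) (h2 : b.Isom c) : a.Isom c := by
  obtain ⟨f, hadj, hphi⟩ := h1
  obtain ⟨g, hadj', hphi'⟩ := h2
  exact ⟨f.trans g, fun u v => (hadj u v).trans (hadj' (f u) (f v)),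
    fun x => by simp [Equiv.trans_apply, hphi, hphi']⟩

/-- The degree of a vertex. -/
def deg (N : XCactus X) (v : N.V) : ℕ := (N.G.neighborSet v).ncard

/-- A leaf is a vertex of degree one. -/
def IsLeaf (N : XCactus X) (v : N.V) : Prop := N.deg v = 1

/-- A phylogenetic `X`-cactus: the labelling map is a bijection onto the leaves. -/
def Phylogenetic (N : XCactus X) : Prop :=
  Function.Injective N.φ ∧ Set.range N.φ = {v : N.V | N.IsLeaf v}

/-- A binary `X`-cactus: every internal vertex has degree three. -/
def Binary (N : XCactus X) : Prop := ∀ v : N.V, ¬ N.IsLeaf v → N.deg v = 3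

/-- A vertex is contained in some cycle. -/
def InCycle (N : XCactus X) (v : N.V) : Prop :=
  ∃ (w : N.V) (c : N.G.Walk w w), c.IsCycle ∧ v ∈ c.support

/-- A vertex is contained in some tiny cycle (a cycle with exactly three vertices). -/
def InTinyCycle (N : XCactus X) (v : N.V) : Prop :=
  ∃ (w : N.V) (c : N.G.Walk w w), c.IsCycle ∧ c.length = 3 ∧ v ∈ c.support

/-- An `X`-tree is an `X`-cactus whose underlying graph is a tree (i.e. acyclic). -/
def IsXTree (N : XCactus X) : Prop := N.G.IsAcyclic

end XCactus

/-- The rank of an `X`-cactus: `ρ(N) = Σ_{σ ∈ C(N)} max 1 (|σ| - 2)`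
(`ρ(N) = 0` for the trivial `X`-cactus, whose `C(N)` is empty). -/
def rho {X : Type} (N : XCactus X) : ℤ :=
  ∑ᶠ σ ∈ N.circSet, max 1 ((σ.numParts : ℤ) - 2)

end PhyloCactus

namespace PhyloCactus

variable {X : Type}

/-- `X`-cactuses up to isomorphism. -/
def xcactusSetoid (X : Type) : Setoid (XCactus X) where
  r := XCactus.Isom
  iseqv := ⟨XCactus.isom_refl, XCactus.isom_symm, XCactus.isom_trans⟩

/-- `G(X)`: the set of `X`-cactuses up to isomorphism. -/
def GX (X : Type) := Quotient (xcactusSetoid X)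

/-- The isomorphism class of an `X`-cactus. -/
def GX.mk (N : XCactus X) : GX X := Quotient.mk (xcactusSetoid X) N

/-- `f : N.V → N'.V` realises `N'` as the result of collapsing the set `S` of
vertices of `N` to a single vertex (keeping all adjacencies between distinct
images, and relabelling by composition). -/
def ContractionMapSpec (N N' : XCactus X) (S : Set N.V) (f : N.V → N'.V) : Prop :=
  Function.Surjective f ∧
  (∀ a b : N.V, f a = f b ↔ (a = b ∨ (a ∈ S ∧ b ∈ S))) ∧
  (∀ a b : N.V, N'.G.Adj (f a) (f b) ↔
    (f a ≠ f b ∧ ∃ a' b' : N.V, f a' = f a ∧ f b' = f b ∧ N.G.Adj a' b')) ∧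
  (∀ x : X, N'.φ x = f (N.φ x))

/-- `N'` is obtained from `N` by contracting an edge `{u, v}` that is not
contained in a tiny cycle (equivalently, `u` and `v` have no common neighbour):
`u` and `v` are identified and the new vertex is labelled by
`φ⁻¹(u) ∪ φ⁻¹(v)`. -/
def IsEdgeContraction (N N' : XCactus X) : Prop :=
  ∃ (u v : N.V) (f : N.V → N'.V), N.G.Adj u v ∧
    (¬ ∃ w : N.V, N.G.Adj u w ∧ N.G.Adj v w) ∧
    ContractionMapSpec N N' {u, v} f

/-- `N'` is obtained from `N` by a triple contraction of a tiny cycle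
`v₁, v₂, v₃`: the cycle is collapsed to a single vertex, labelled by the union
of the labels of `v₁, v₂, v₃`, adjacent to exactly the former outside
neighbours of the cycle. -/
def IsTripleContraction (N N' : XCactus X) : Prop :=
  ∃ (v₁ v₂ v₃ : N.V) (f : N.V → N'.V),
    N.G.Adj v₁ v₂ ∧ N.G.Adj v₂ v₃ ∧ N.G.Adj v₁ v₃ ∧
    ContractionMapSpec N N' {v₁, v₂, v₃} f

/-- A contraction is an edge contraction or a triple contraction. -/
def IsContraction (N N' : XCactus X) : Prop :=
  IsEdgeContraction N N' ∨ IsTripleContraction N N'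

/-- One contraction step on isomorphism classes of `X`-cactuses. -/
def GStep (a b : GX X) : Prop :=
  ∃ N N' : XCactus X, a = GX.mk N ∧ b = GX.mk N' ∧ IsContraction N N'

/-- The order on `G(X)`: `a ≤ b` iff there is a (possibly empty) sequence of
contractions transforming `b` into `a`. -/
def GLe (a b : GX X) : Prop := Relation.ReflTransGen GStep b a

/-- The associated strict order on `G(X)`. -/
def GLt (a b : GX X) : Prop := GLe a b ∧ a ≠ b

/-- One edge-contraction step between (classes of) `X`-trees. -/
def TStep (a b : GX X) : Prop :=
  ∃ N N' : XCactus X, XCactus.IsXTree N ∧ XCactus.IsXTree N' ∧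
    a = GX.mk N ∧ b = GX.mk N' ∧ IsEdgeContraction N N'

/-- The order on `T(X)`: `a ≤ b` iff `a` is obtained from `b` by a (possibly
empty) sequence of edge contractions of `X`-trees. -/
def TLe (a b : GX X) : Prop := Relation.ReflTransGen TStep b a

end PhyloCactus

namespace PhyloCactus

/-- A semi-labelled `X`-tree: a finite tree together with a map `ψ : X → V`
whose image contains every leaf. -/
structure SemiTree (X : Type) where
  V : Type
  fintypeV : Fintype V
  G : SimpleGraph V
  isTree : G.IsTree
  ψ : X → V
  leaves : ∀ v : V, (G.neighborSet v).ncard = 1 → v ∈ Set.range ψ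

namespace SemiTree

variable {X : Type}

/-- The partition `π(v)` of `X` induced by deleting the vertex `v`: its parts
are the label sets of the connected components of `T - v`. -/
def vertexPart (T : SemiTree X) (v : T.V) : Set (Set X) :=
  {P | ∃ w : T.V, w ≠ v ∧
    P = {x : X | (T.G.deleteEdges {e | v ∈ e}).Reachable w (T.ψ x)}}

/-- The split `π(e)` of `X` induced by deleting the edge `e`: its parts are the
label sets of the connected components of `T - e`. -/
def edgePart (T : SemiTree X) (e : Sym2 T.V) : Set (Set X) :=
  {P | ∃ w : T.V, P = {x : X | (T.G.deleteEdges {e}).Reachable w (T.ψ x)}}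

end SemiTree

/-- A semi-tree representation of a collection `Ps` of partitions of `X`:
a semi-labelled `X`-tree together with a map `κ` assigning to each `π ∈ Ps`
either an unlabelled vertex of degree at least three inducing `π`, or an edge
inducing `π`. -/
structure SemiTreeRep (X : Type) (Ps : Set (Set (Set X))) where
  T : SemiTree X
  κ : Set (Set X) → T.V ⊕ Sym2 T.V
  spec : ∀ π ∈ Ps,
    (∃ v : T.V, κ π = Sum.inl v ∧ v ∉ Set.range T.ψ ∧
      3 ≤ (T.G.neighborSet v).ncard ∧ T.vertexPart v = π) ∨
    (∃ e : Sym2 T.V, κ π = Sum.inr e ∧ e ∈ T.G.edgeSet ∧ T.edgePart e = π)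

namespace SemiTreeRep

variable {X : Type} {Ps : Set (Set (Set X))}

/-- `h(e, κ)`: the number of partitions `π ∈ Ps` with `κ(π)` equal to `e` or to
one of its endpoints. -/
def h (R : SemiTreeRep X Ps) (e : Sym2 R.T.V) : ℕ :=
  {π ∈ Ps | (∃ v, v ∈ e ∧ R.κ π = Sum.inl v) ∨ R.κ π = Sum.inr e}.ncard

/-- A perfect semi-tree representation: `h(e, κ) = 1` for every edge, and `κ(π)`
is an edge exactly when `π` is a split (a representation on the trivial
one-vertex tree is perfect by convention). -/
def Perfect (R : SemiTreeRep X Ps) : Prop :=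
  (∀ u v : R.T.V, u = v) ∨
  ((∀ e ∈ R.T.G.edgeSet, R.h e = 1) ∧
    ∀ π ∈ Ps, ((∃ e, R.κ π = Sum.inr e) ↔ π.ncard = 2))

/-- Isomorphism of semi-tree representations. -/
def Isom (R R' : SemiTreeRep X Ps) : Prop :=
  ∃ f : R.T.V ≃ R'.T.V,
    (∀ u v : R.T.V, R.T.G.Adj u v ↔ R'.T.G.Adj (f u) (f v)) ∧
    (∀ x : X, f (R.T.ψ x) = R'.T.ψ x) ∧
    ∀ π ∈ Ps, R'.κ π = Sum.map f (Sym2.map f) (R.κ π)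

end SemiTreeRep

variable {X : Type}

/-- The edge set of the incompatibility graph `I(N₁, N₂)`: pairs of distinct
incompatible circular partitions of `C(N₁) ∪ C(N₂)`. -/
def IncompatEdges (N₁ N₂ : XCactus X) : Set (Sym2 (CircPart X)) :=
  {p | ∃ σ τ : CircPart X, p = s(σ, τ) ∧
    σ ∈ N₁.circSet ∪ N₂.circSet ∧ τ ∈ N₁.circSet ∪ N₂.circSet ∧
    σ ≠ τ ∧ ¬ σ.Compatible τ}

/-- The set `W₀` of isolated vertices of the incompatibility graph `I(N₁, N₂)`. -/
def IsolatedVerts (N₁ N₂ : XCactus X) : Set (CircPart X) :=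
  {σ ∈ N₁.circSet ∪ N₂.circSet |
    ∀ τ ∈ N₁.circSet ∪ N₂.circSet, τ ≠ σ → σ.Compatible τ}

/-- The incompatibility graph `I(N₁, N₂)` is a matching: every vertex has degree
at most one. -/
def IncompatIsMatching (N₁ N₂ : XCactus X) : Prop :=
  ∀ σ ∈ N₁.circSet ∪ N₂.circSet,
    Set.Subsingleton
      {τ | τ ∈ N₁.circSet ∪ N₂.circSet ∧ τ ≠ σ ∧ ¬ σ.Compatible τ}

/-- A resolution of the incompatibility graph: an injective map on its edges
assigning to each edge an upper bound of its two endpoints in `(C(X), ≼)`. -/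
def IsResolution (N₁ N₂ : XCactus X) (lam : Sym2 (CircPart X) → CircPart X) : Prop :=
  Set.InjOn lam (IncompatEdges N₁ N₂) ∧
  ∀ p ∈ IncompatEdges N₁ N₂, ∀ σ, σ ∈ p → CircPart.Preceq σ (lam p)

/-- A minimal resolution: each `lam p` is a least upper bound of the endpoints
of `p` in `(C(X), ≼)`, i.e. no upper bound of the endpoints is strictly below it. -/
def IsMinimalResolution (N₁ N₂ : XCactus X)
    (lam : Sym2 (CircPart X) → CircPart X) : Prop :=
  IsResolution N₁ N₂ lam ∧
  ∀ p ∈ IncompatEdges N₁ N₂, ∀ μ : CircPart X,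
    (∀ σ, σ ∈ p → CircPart.Preceq σ μ) →
    ¬ (CircPart.Preceq μ (lam p) ∧ μ ≠ lam p)

/-- The set of lower bounds in `(C(X), ≼)` of an `m`-tuple of circular partitions. -/
def TupleLowerBounds (m : ℕ) (μ : Fin m → CircPart X) : Set (CircPart X) :=
  {ν | ∀ i : Fin m, CircPart.Preceq ν (μ i)}

/-- The set `glb(μ₁, …, μ_m)` of greatest lower bounds of an `m`-tuple in
`(C(X), ≼)`: lower bounds above which there is no strictly larger lower bound. -/
def TupleGlb (m : ℕ) (μ : Fin m → CircPart X) : Set (CircPart X) :=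
  {ν ∈ TupleLowerBounds m μ |
    ∀ ν' ∈ TupleLowerBounds m μ, CircPart.Preceq ν ν' → ν' = ν}

/-- A feasible subset `Γ` of `C_p(N₁) × ⋯ × C_p(N_m)`: nonempty, every element
has a meet, and distinct elements differ in every coordinate. -/
def Feasible (m : ℕ) (Ns : Fin m → XCactus X)
    (Γ : Set (Fin m → CircPart X)) : Prop :=
  Γ.Nonempty ∧ (∀ μ ∈ Γ, ∀ i : Fin m, μ i ∈ (Ns i).properSet) ∧
  (∀ μ ∈ Γ, (TupleGlb m μ).Nonempty) ∧
  (∀ μ ∈ Γ, ∀ μ' ∈ Γ, μ ≠ μ' → ∀ i : Fin m, μ i ≠ μ' i)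

/-- A meet realization of a feasible set `Γ`: a set of circular partitions
containing exactly one greatest lower bound for each element of `Γ`, minimal
under inclusion with this property. -/
def MeetRealization (m : ℕ) (Γ : Set (Fin m → CircPart X))
    (C : Set (CircPart X)) : Prop :=
  (∀ μ ∈ Γ, ∃! ν, ν ∈ C ∧ ν ∈ TupleGlb m μ) ∧
  ∀ C' ⊆ C, (∀ μ ∈ Γ, ∃! ν, ν ∈ C' ∧ ν ∈ TupleGlb m μ) → C' = C

/-! ### Auxiliary lemmas for the common-upper-bound theorem -/

/-- A convenient invariant for lists of parts: all parts nonempty, pairwise disjoint,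
and covering `X`. -/
def GoodList (X : Type) (l : List (Set X)) : Prop :=
  (∀ A ∈ l, A.Nonempty) ∧ List.Pairwise Disjoint l ∧ ∀ x : X, ∃ A ∈ l, x ∈ A

/-- The union of the sets in a list. -/
def sUL {X : Type} (l : List (Set X)) : Set X := {x | ∃ s ∈ l, x ∈ s}

lemma sUL_nil {X : Type} : sUL ([] : List (Set X)) = ∅ := by
  ext x; simp [sUL]

lemma sUL_cons {X : Type} (a : Set X) (t : List (Set X)) : sUL (a :: t) = a ∪ sUL t := by
  ext x; simp [sUL]

lemma sUL_append {X : Type} (u v : List (Set X)) : sUL (u ++ v) = sUL u ∪ sUL v := by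
  ext x; simp [sUL, or_and_right, exists_or]

lemma sUL_singleton {X : Type} (a : Set X) : sUL [a] = a := by
  ext x; simp [sUL]

lemma mem_sUL {X : Type} {l : List (Set X)} {A : Set X} (hA : A ∈ l) : A ⊆ sUL l :=
  fun x hx => ⟨A, hA, hx⟩

lemma goodList_of_isPartList {X : Type} {l : List (Set X)} (h : IsPartList X l) :
    GoodList X l := by
  obtain ⟨-, hnd, hne, hx⟩ := h
  refine ⟨hne, ?_, fun x => ?_⟩
  · refine hnd.imp_of_mem ?_
    intro a b ha hb hab
    rw [Set.disjoint_left]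
    intro x hxa hxb
    obtain ⟨A, -, hu⟩ := hx x
    exact hab ((hu a ⟨ha, hxa⟩).trans (hu b ⟨hb, hxb⟩).symm)
  · obtain ⟨A, ⟨hA, hxA⟩, -⟩ := hx x
    exact ⟨A, hA, hxA⟩

lemma isPartList_of_goodList {X : Type} {l : List (Set X)} (h : GoodList X l)
    (h2 : 2 ≤ l.length) : IsPartList X l := by
  obtain ⟨hne, hd, hx⟩ := h
  have hdisj : ∀ a ∈ l, ∀ b ∈ l, a ≠ b → Disjoint a b := by
    intro a ha b hb hab
    haveI : Std.Symm (α := Set X) Disjoint := ⟨fun _ _ h => h.symm⟩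
    exact hd.forall ha hb hab
  refine ⟨h2, ?_, hne, fun x => ?_⟩
  · refine hd.imp_of_mem ?_
    intro a b ha hb hab hEq
    subst hEq
    rw [disjoint_self] at hab
    obtain ⟨y, hy⟩ := hne a ha
    rw [hab] at hy
    exact hy
  · obtain ⟨A, hA, hxA⟩ := hx x
    refine ⟨A, ⟨hA, hxA⟩, ?_⟩
    rintro B ⟨hB, hxB⟩
    by_contra hne'
    exact Set.disjoint_left.mp (hdisj B hB A hA hne') hxB hxA

lemma isPartList_perm {X : Type} {l l' : List (Set X)} (hp : l.Perm l')
    (h : IsPartList X l) : IsPartList X l' := by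
  obtain ⟨hl, hnd, hne, hx⟩ := h
  refine ⟨hp.length_eq ▸ hl, hp.nodup hnd, fun A hA => hne A (hp.mem_iff.mpr hA),
    fun x => ?_⟩
  obtain ⟨A, ⟨hA, hxA⟩, hu⟩ := hx x
  exact ⟨A, ⟨hp.mem_iff.mp hA, hxA⟩, fun B hB => hu B ⟨hp.mem_iff.mpr hB.1, hB.2⟩⟩

lemma mk_congr {X : Type} {l l' : List (Set X)} (h : l = l') (h1 : IsPartList X l)
    (h2 : IsPartList X l') : CircPart.mk ⟨l, h1⟩ = CircPart.mk ⟨l', h2⟩ := by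
  subst h; rfl

lemma eqvGen_rotate {X : Type} (l : List (Set X)) (n : ℕ) :
    Relation.EqvGen (CircStep X) l (l.rotate n) := by
  induction n with
  | zero => rw [List.rotate_zero]; exact Relation.EqvGen.refl l
  | succ n ih =>
      have h : l.rotate (n + 1) = (l.rotate n).rotate 1 := by
        rw [List.rotate_rotate]
      rw [h]
      exact Relation.EqvGen.trans _ _ _ ih
        (Relation.EqvGen.rel _ _ (Or.inl rfl))

lemma mk_rotate {X : Type} (l : List (Set X)) (n : ℕ) (h1 : IsPartList X l)
    (h2 : IsPartList X (l.rotate n)) :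
    CircPart.mk ⟨l, h1⟩ = CircPart.mk ⟨l.rotate n, h2⟩ :=
  Quotient.sound (eqvGen_rotate l n)

lemma goodList_merge {X : Type} {A B : Set X} {t : List (Set X)}
    (h : GoodList X (A :: B :: t)) : GoodList X ((A ∪ B) :: t) := by
  obtain ⟨hne, hd, hx⟩ := h
  rw [List.pairwise_cons] at hd
  obtain ⟨hAd, hd⟩ := hd
  rw [List.pairwise_cons] at hd
  obtain ⟨hBd, hd⟩ := hd
  refine ⟨?_, ?_, fun x => ?_⟩
  · intro C hC
    rcases List.mem_cons.mp hC with rfl | hC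
    · obtain ⟨y, hy⟩ := hne A (by simp)
      exact ⟨y, Or.inl hy⟩
    · exact hne C (by simp [hC])
  · rw [List.pairwise_cons]
    refine ⟨fun C hC => ?_, hd⟩
    exact Disjoint.union_left (hAd C (by simp [hC])) (hBd C hC)
  · obtain ⟨C, hC, hxC⟩ := hx x
    rcases List.mem_cons.mp hC with h | hC
    · exact ⟨A ∪ B, List.mem_cons_self, Or.inl (h ▸ hxC)⟩
    rcases List.mem_cons.mp hC with h | hC
    · exact ⟨A ∪ B, List.mem_cons_self, Or.inr (h ▸ hxC)⟩
    · exact ⟨C, by simp [hC], hxC⟩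

lemma chain_merge {X : Type} (vs : List (Set X)) (hvs : vs ≠ []) :
    ∀ (n : ℕ) (us : List (Set X)), us.length ≤ n → us ≠ [] →
    GoodList X (us ++ vs) → ∀ h1 h2,
    Relation.ReflTransGen MergeStep (CircPart.mk ⟨us ++ vs, h1⟩)
      (CircPart.mk ⟨sUL us :: vs, h2⟩) := by
  intro n
  induction n with
  | zero =>
      intro us hlen hus
      interval_cases h : us.length
      · exact absurd (List.length_eq_zero_iff.mp h) hus
  | succ n ih =>
      intro us hlen hus hinv h1 h2
      match us with
      | [u] =>
          have heq : ([u] ++ vs : List (Set X)) = sUL [u] :: vs := by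
            rw [sUL_singleton]; rfl
          rw [mk_congr heq h1 h2]
      | u₁ :: u₂ :: t =>
          have hgood' : GoodList X (((u₁ ∪ u₂) :: t) ++ vs) := by
            have : GoodList X (u₁ :: u₂ :: (t ++ vs)) := hinv
            exact goodList_merge this
          have hlen2 : 2 ≤ (((u₁ ∪ u₂) :: t) ++ vs).length := by
            rcases vs with _ | ⟨v, vs'⟩
            · exact absurd rfl hvs
            · simp; omega
          have h1' : IsPartList X (((u₁ ∪ u₂) :: t) ++ vs) :=
            isPartList_of_goodList hgood' hlen2
          have hstep : MergeStep (CircPart.mk ⟨(u₁ :: u₂ :: t) ++ vs, h1⟩)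
              (CircPart.mk ⟨((u₁ ∪ u₂) :: t) ++ vs, h1'⟩) :=
            ⟨u₁, u₂, t ++ vs, h1, h1', rfl, rfl⟩
          have hlen' : ((u₁ ∪ u₂) :: t).length ≤ n := by
            simp at hlen ⊢; omega
          have h2' : IsPartList X (sUL ((u₁ ∪ u₂) :: t) :: vs) := by
            have : sUL ((u₁ ∪ u₂) :: t) = sUL (u₁ :: u₂ :: t) := by
              rw [sUL_cons, sUL_cons, sUL_cons, Set.union_assoc]
            rw [this]; exact h2
          have htail := ih ((u₁ ∪ u₂) :: t) hlen' (by simp) hgood' h1' h2'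
          have hend : CircPart.mk ⟨sUL ((u₁ ∪ u₂) :: t) :: vs, h2'⟩
              = CircPart.mk ⟨sUL (u₁ :: u₂ :: t) :: vs, h2⟩ := by
            apply mk_congr
            rw [sUL_cons, sUL_cons, sUL_cons, Set.union_assoc]
          exact Relation.ReflTransGen.head hstep (hend ▸ htail)

end PhyloCactus

open PhyloCactus

/-- If two proper circular partitions `σ₁`, `σ₂` of `X` are compatible, then there
exists a circular partition `σ'` of `X` with `σ₁ ≼ σ'` and `σ₂ ≼ σ'`. -/
theorem compatible_proper_have_common_upper_bound
    (X : Type) [Fintype X] (hX : 2 ≤ Fintype.card X)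
    (σ₁ σ₂ : CircPart X) (h₁ : ¬ σ₁.IsSplit) (h₂ : ¬ σ₂.IsSplit)
    (hc : σ₁.Compatible σ₂) :
    ∃ σ' : CircPart X, σ₁.Preceq σ' ∧ σ₂.Preceq σ' := by
  obtain ⟨A, hA, B, hB, hAB⟩ := hc
  obtain ⟨lA, hσ1, hAmem⟩ := hA
  obtain ⟨lB, hσ2, hBmem⟩ := hB
  obtain ⟨p₁, s₁, hl1⟩ := List.append_of_mem hAmem
  obtain ⟨p₂, s₂, hl2⟩ := List.append_of_mem hBmem
  set as : List (Set X) := s₁ ++ p₁ with has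
  set bs : List (Set X) := s₂ ++ p₂ with hbs
  -- rotate `lA` so that `A` is last, and `lB` so that `B` is first
  have hrot1 : lA.1.rotate (p₁.length + 1) = as ++ [A] := by
    have hsplit : p₁ ++ A :: s₁ = (p₁ ++ [A]) ++ s₁ := by simp
    rw [hl1, hsplit, List.rotate_eq_drop_append_take (by simp)]
    rw [show p₁.length + 1 = (p₁ ++ [A]).length by simp]
    rw [List.drop_left, List.take_left, has]
    simp
  have hrot2 : lB.1.rotate p₂.length = B :: bs := by
    rw [hl2, List.rotate_eq_drop_append_take (by simp)]
    rw [show p₂.length = (p₂ : List (Set X)).length from rfl]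
    rw [List.drop_left, List.take_left, hbs]
    simp
  have hplA' : IsPartList X (as ++ [A]) := by
    rw [← hrot1]; exact isPartList_perm (lA.1.rotate_perm _).symm lA.2
  have hplB' : IsPartList X (B :: bs) := by
    rw [← hrot2]; exact isPartList_perm (lB.1.rotate_perm _).symm lB.2
  have hσ1' : σ₁ = CircPart.mk ⟨as ++ [A], hplA'⟩ := by
    have hrPL : IsPartList X (lA.1.rotate (p₁.length + 1)) := by
      rw [hrot1]; exact hplA'
    rw [hσ1, show lA = (⟨lA.1, lA.2⟩ : PartList X) from rfl,
      mk_rotate lA.1 (p₁.length + 1) lA.2 hrPL]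
    exact mk_congr hrot1 hrPL hplA'
  have hσ2' : σ₂ = CircPart.mk ⟨B :: bs, hplB'⟩ := by
    have hrPL : IsPartList X (lB.1.rotate p₂.length) := by
      rw [hrot2]; exact hplB'
    rw [hσ2, show lB = (⟨lB.1, lB.2⟩ : PartList X) from rfl,
      mk_rotate lB.1 p₂.length lB.2 hrPL]
    exact mk_congr hrot2 hrPL hplB'
  -- lengths
  have hlenA : (as ++ [A]).length ≠ 2 := fun h => h₁ ⟨⟨as ++ [A], hplA'⟩, hσ1', h⟩
  have hlenB : (B :: bs).length ≠ 2 := fun h => h₂ ⟨⟨B :: bs, hplB'⟩, hσ2', h⟩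
  have haslen : 2 ≤ as.length := by
    have := hplA'.1
    simp at this hlenA ⊢
    omega
  have hbslen : 1 ≤ bs.length := by
    have := hplB'.1
    simp at this ⊢
    omega
  have has_ne : as ≠ [] := by
    intro h; rw [h] at haslen; simp at haslen
  have hbs_ne : bs ≠ [] := by
    intro h; rw [h] at hbslen; simp at hbslen
  -- set-theoretic facts
  have hgA : GoodList X (as ++ [A]) := goodList_of_isPartList hplA'
  have hgB : GoodList X (B :: bs) := goodList_of_isPartList hplB'
  have hABx : ∀ x : X, x ∈ A ∨ x ∈ B := by
    intro x
    have : x ∈ A ∪ B := hAB ▸ Set.mem_univ x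
    exact this
  have hcrossA : ∀ C ∈ as, Disjoint C A := by
    intro C hC
    exact ((List.pairwise_append.mp hgA.2.1).2.2) C hC A (List.mem_singleton_self A)
  have hcrossB : ∀ D ∈ bs, Disjoint B D := by
    intro D hD
    exact (List.pairwise_cons.mp hgB.2.1).1 D hD
  have hasAc : sUL as = Aᶜ := by
    ext x
    constructor
    · rintro ⟨C, hC, hxC⟩
      exact Set.disjoint_left.mp (hcrossA C hC) hxC
    · intro hx
      obtain ⟨C, hC, hxC⟩ := hgA.2.2 x
      rcases List.mem_append.mp hC with hC | hC
      · exact ⟨C, hC, hxC⟩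
      · rw [List.mem_singleton.mp hC] at hxC
        exact absurd hxC hx
  have hbsBc : sUL bs = Bᶜ := by
    ext x
    constructor
    · rintro ⟨D, hD, hxD⟩
      exact fun hxB => Set.disjoint_left.mp (hcrossB D hD) hxB hxD
    · intro hx
      obtain ⟨D, hD, hxD⟩ := hgB.2.2 x
      rcases List.mem_cons.mp hD with h | hD
      · rw [h] at hxD; exact absurd hxD hx
      · exact ⟨D, hD, hxD⟩
  have has_sub : ∀ C ∈ as, C ⊆ Aᶜ := fun C hC => hasAc ▸ mem_sUL hC
  have hbs_sub : ∀ D ∈ bs, D ⊆ Bᶜ := fun D hD => hbsBc ▸ mem_sUL hD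
  -- the middle block
  have key : ∃ mid : List (Set X), (∀ C ∈ mid, C.Nonempty) ∧
      (∀ C ∈ mid, C ⊆ A ∧ C ⊆ B) ∧ mid.Pairwise Disjoint ∧
      (∀ x : X, x ∈ A → x ∈ B → ∃ C ∈ mid, x ∈ C) := by
    rcases Set.eq_empty_or_nonempty (A ∩ B) with hmid | hmid
    · refine ⟨[], by simp, by simp, by simp, fun x hxA hxB => ?_⟩
      exact absurd (Set.mem_inter hxA hxB) (hmid ▸ Set.notMem_empty x)
    · refine ⟨[A ∩ B], ?_, ?_, by simp, fun x hxA hxB => ⟨A ∩ B, by simp, hxA, hxB⟩⟩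
      · intro C hC; rw [List.mem_singleton.mp hC]; exact hmid
      · intro C hC; rw [List.mem_singleton.mp hC]
        exact ⟨Set.inter_subset_left, Set.inter_subset_right⟩
  obtain ⟨mid, hmne, hmsub, hmpw, hmcov⟩ := key
  -- the common refinement list
  have hgood' : GoodList X ((as ++ mid) ++ bs) := by
    refine ⟨?_, ?_, ?_⟩
    · intro C hC
      rcases List.mem_append.mp hC with hC | hC
      · rcases List.mem_append.mp hC with hC | hC
        · exact hgA.1 C (List.mem_append_left _ hC)
        · exact hmne C hC
      · exact hgB.1 C (List.mem_cons_of_mem _ hC)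
    · rw [List.pairwise_append]
      refine ⟨?_, ?_, ?_⟩
      · rw [List.pairwise_append]
        refine ⟨(List.pairwise_append.mp hgA.2.1).1, hmpw, ?_⟩
        intro C hC D hD
        exact Set.disjoint_left.mpr fun {x} hxC hxD =>
          (has_sub C hC hxC) ((hmsub D hD).1 hxD)
      · exact (List.pairwise_cons.mp hgB.2.1).2
      · intro C hC D hD
        rcases List.mem_append.mp hC with hC | hC
        · refine Set.disjoint_left.mpr fun {x} hxC hxD => ?_
          have hxA : x ∉ A := has_sub C hC hxC
          have hxB : x ∈ B := (hABx x).resolve_left hxA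
          exact hbs_sub D hD hxD hxB
        · exact Set.disjoint_left.mpr fun {x} hxC hxD =>
            hbs_sub D hD hxD ((hmsub C hC).2 hxC)
    · intro x
      by_cases hxA : x ∈ A
      · by_cases hxB : x ∈ B
        · obtain ⟨C, hC, hxC⟩ := hmcov x hxA hxB
          exact ⟨C, List.mem_append_left _ (List.mem_append_right _ hC), hxC⟩
        · obtain ⟨D, hD, hxD⟩ : ∃ D ∈ bs, x ∈ D := by
            have : x ∈ sUL bs := hbsBc ▸ hxB
            exact this
          exact ⟨D, List.mem_append_right _ hD, hxD⟩
      · obtain ⟨C, hC, hxC⟩ : ∃ C ∈ as, x ∈ C := by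
          have : x ∈ sUL as := hasAc ▸ hxA
          exact this
        exact ⟨C, List.mem_append_left _ (List.mem_append_left _ hC), hxC⟩
  have hlen' : 2 ≤ ((as ++ mid) ++ bs).length := by simp; omega
  have hpl' : IsPartList X ((as ++ mid) ++ bs) := isPartList_of_goodList hgood' hlen'
  -- union computations
  have hUas : sUL (as ++ mid) = B := by
    ext x
    rw [sUL_append, hasAc]
    constructor
    · rintro (hx | ⟨C, hC, hxC⟩)
      · exact (hABx x).resolve_left hx
      · exact (hmsub C hC).2 hxC
    · intro hxB
      by_cases hxA : x ∈ A
      · obtain ⟨C, hC, hxC⟩ := hmcov x hxA hxB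
        exact Or.inr ⟨C, hC, hxC⟩
      · exact Or.inl hxA
  have hUmb : sUL (mid ++ bs) = A := by
    ext x
    rw [sUL_append, hbsBc]
    constructor
    · rintro (⟨C, hC, hxC⟩ | hx)
      · exact (hmsub C hC).1 hxC
      · exact (hABx x).resolve_right hx
    · intro hxA
      by_cases hxB : x ∈ B
      · obtain ⟨C, hC, hxC⟩ := hmcov x hxA hxB
        exact Or.inl ⟨C, hC, hxC⟩
      · exact Or.inr hxB
  refine ⟨CircPart.mk ⟨(as ++ mid) ++ bs, hpl'⟩, ?_, ?_⟩
  · -- σ₁ ≼ σ'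
    have hrotσ' : ((as ++ mid) ++ bs).rotate as.length = (mid ++ bs) ++ as := by
      rw [List.append_assoc, List.rotate_eq_drop_append_take (by simp),
        List.drop_left, List.take_left]
    have hplrot : IsPartList X ((mid ++ bs) ++ as) := by
      rw [← hrotσ']
      exact isPartList_perm (((as ++ mid) ++ bs).rotate_perm _).symm hpl'
    have hgoodrot : GoodList X ((mid ++ bs) ++ as) := goodList_of_isPartList hplrot
    have hσ'eq : CircPart.mk ⟨(as ++ mid) ++ bs, hpl'⟩
        = CircPart.mk ⟨(mid ++ bs) ++ as, hplrot⟩ := by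
      have hrPL : IsPartList X (((as ++ mid) ++ bs).rotate as.length) := by
        rw [hrotσ']; exact hplrot
      rw [mk_rotate _ as.length hpl' hrPL]
      exact mk_congr hrotσ' hrPL hplrot
    have hmb_ne : mid ++ bs ≠ [] := by
      intro h
      exact hbs_ne (List.append_eq_nil_iff.mp h).2
    have hplend : IsPartList X (sUL (mid ++ bs) :: as) := by
      rw [hUmb]
      refine isPartList_perm ?_ hplA'
      exact List.perm_append_singleton A as
    have hchain := chain_merge as has_ne (mid ++ bs).length (mid ++ bs) le_rfl
      hmb_ne hgoodrot hplrot hplend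
    have hend : CircPart.mk ⟨sUL (mid ++ bs) :: as, hplend⟩ = σ₁ := by
      have hplcons : IsPartList X (A :: as) := by
        rw [← hUmb]; exact hplend
      rw [mk_congr (by rw [hUmb]) hplend hplcons, hσ1']
      have hrc : (A :: as).rotate 1 = as ++ [A] := by
        rw [List.rotate_cons_succ, List.rotate_zero]
      have hrPL : IsPartList X ((A :: as).rotate 1) := by rw [hrc]; exact hplA'
      rw [mk_rotate (A :: as) 1 hplcons hrPL]
      exact mk_congr hrc hrPL hplA'
    exact Or.inr ⟨h₁, by rw [hσ'eq, ← hend]; exact hchain⟩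
  · -- σ₂ ≼ σ'
    have ham_ne : as ++ mid ≠ [] := by
      intro h
      exact has_ne (List.append_eq_nil_iff.mp h).1
    have hplend : IsPartList X (sUL (as ++ mid) :: bs) := by
      rw [hUas]; exact hplB'
    have hchain := chain_merge bs hbs_ne (as ++ mid).length (as ++ mid) le_rfl
      ham_ne hgood' hpl' hplend
    have hend : CircPart.mk ⟨sUL (as ++ mid) :: bs, hplend⟩ = σ₂ := by
      rw [mk_congr (by rw [hUas]) hplend hplB', hσ2']
    exact Or.inr ⟨h₂, by rw [← hend]; exact hchain⟩
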